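/- If every bridgeless cubic graph admits an (r,d)-NZF, then every bridgeless graph admits an (r,d)-NZF (for fixed d ≥ 1 and real r ≥ 2). -/

import Mathlib

open scoped BigOperators

noncomputable section

/-- The vector `(x, y)` in the Euclidean plane `ℝ²`. -/
def vec2 (x y : ℝ) : EuclideanSpace ℝ (Fin 2) := (WithLp.equiv 2 (Fin 2 → ℝ)).symm ![x, y]

/-- `f` is a `d`-dimensional nowhere-zero `r`-flow ((r,d)-NZF) on the graph `G`.
We encode an orientation together with a flow as a skew-symmetric function on ordered
pairs of vertices, supported on adjacent pairs, whose values (on edges) have Euclidean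
norm in `[1, r-1]`, and which satisfies Kirchhoff's law at every vertex. -/
def IsNZF {V : Type} [Fintype V] (G : SimpleGraph V) (d : ℕ) (r : ℝ)
    (f : V → V → EuclideanSpace ℝ (Fin d)) : Prop :=
  (∀ u v, f u v = - f v u) ∧
  (∀ u v, ¬ G.Adj u v → f u v = 0) ∧
  (∀ u v, G.Adj u v → 1 ≤ ‖f u v‖ ∧ ‖f u v‖ ≤ r - 1) ∧
  (∀ v, ∑ u, f v u = 0)

/-- `G` admits an `(r,d)`-NZF. -/
def HasNZF {V : Type} [Fintype V] (G : SimpleGraph V) (d : ℕ) (r : ℝ) : Prop :=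
  ∃ f, IsNZF G d r f

/-- A graph is bridgeless if none of its edges is a bridge. -/
def Bridgeless {V : Type} (G : SimpleGraph V) : Prop :=
  ∀ e ∈ G.edgeSet, ¬ G.IsBridge e

namespace NZFRed

attribute [local instance] Classical.propDecidable

variable {W : Type} [Fintype W] (H : SimpleGraph W)

/-! ### Mod arithmetic helpers -/

lemma mod_succ_ne {k : ℕ} (hk : 2 ≤ k) {i : ℕ} (hi : i < k) : (i + 1) % k ≠ i := by
  rcases Nat.lt_or_ge (i + 1) k with h | h
  · rw [Nat.mod_eq_of_lt h]; omega
  · have h' : i + 1 = k := by omega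
    rw [h', Nat.mod_self]; omega

lemma mod_succ_succ_ne {k : ℕ} (hk : 3 ≤ k) {i : ℕ} (hi : i < k) :
    ((i + 1) % k + 1) % k ≠ i := by
  rcases Nat.lt_or_ge (i + 1) k with h | h
  · rw [Nat.mod_eq_of_lt h]
    rcases Nat.lt_or_ge (i + 2) k with h2 | h2
    · rw [Nat.mod_eq_of_lt (by omega)]; omega
    · have h' : i + 2 = k := by omega
      rw [(by omega : i + 1 + 1 = k), Nat.mod_self]; omega
  · have h' : i + 1 = k := by omega
    rw [h', Nat.mod_self, Nat.mod_eq_of_lt (by omega)]; omega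

lemma fin2_eq_one {i : Fin 2} (h : i ≠ 0) : i = 1 := by
  rcases i with ⟨iv, hiv⟩
  apply Fin.ext
  have h0 : iv ≠ 0 := fun h0 => h (Fin.ext h0)
  simp only [Fin.val_one]
  omega

/-- Cyclic successor on `Fin k`. -/
def nextIdx {k : ℕ} (i : Fin k) : Fin k := ⟨(i.val + 1) % k, Nat.mod_lt _ i.pos⟩

/-- Add a natural number cyclically. -/
def addIdx {k : ℕ} (i : Fin k) (m : ℕ) : Fin k := ⟨(i.val + m) % k, Nat.mod_lt _ i.pos⟩

lemma addIdx_zero {k : ℕ} (i : Fin k) : addIdx i 0 = i := by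
  simp [addIdx, Nat.mod_eq_of_lt i.isLt]

lemma nextIdx_addIdx {k : ℕ} (i : Fin k) (m : ℕ) : nextIdx (addIdx i m) = addIdx i (m + 1) := by
  simp only [nextIdx, addIdx, Fin.mk.injEq]
  rw [Nat.mod_add_mod, Nat.add_assoc]

lemma nextIdx_ne {k : ℕ} (hk : 2 ≤ k) (i : Fin k) : nextIdx i ≠ i := by
  intro h
  exact mod_succ_ne hk i.isLt (congrArg Fin.val h)

lemma nextIdx_nextIdx_ne {k : ℕ} (hk : 3 ≤ k) (i : Fin k) : nextIdx (nextIdx i) ≠ i := by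
  intro h
  exact mod_succ_succ_ne hk i.isLt (congrArg Fin.val h)

lemma nextIdx_injective {k : ℕ} : Function.Injective (nextIdx (k := k)) := by
  intro i j h
  have hv : (i.val + 1) % k = (j.val + 1) % k := congrArg Fin.val h
  have hi := i.isLt; have hj := j.isLt
  apply Fin.ext
  rcases Nat.lt_or_ge (i.val + 1) k with h1 | h1 <;> rcases Nat.lt_or_ge (j.val + 1) k with h2 | h2
  · rw [Nat.mod_eq_of_lt h1, Nat.mod_eq_of_lt h2] at hv; omega
  · rw [Nat.mod_eq_of_lt h1, (by omega : j.val + 1 = k), Nat.mod_self] at hv; omega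
  · rw [Nat.mod_eq_of_lt h2, (by omega : i.val + 1 = k), Nat.mod_self] at hv; omega
  · omega

/-- Cyclic predecessor on `Fin k`. -/
def prevIdx {k : ℕ} (i : Fin k) : Fin k := ⟨(i.val + (k - 1)) % k, Nat.mod_lt _ i.pos⟩

lemma nextIdx_prevIdx {k : ℕ} (i : Fin k) : nextIdx (prevIdx i) = i := by
  have hk := i.pos
  apply Fin.ext
  show ((i.val + (k - 1)) % k + 1) % k = i.val
  rw [Nat.mod_add_mod, (by omega : i.val + (k - 1) + 1 = i.val + k), Nat.add_mod_right,
    Nat.mod_eq_of_lt i.isLt]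

lemma prevIdx_nextIdx {k : ℕ} (i : Fin k) : prevIdx (nextIdx i) = i := by
  have hk := i.pos
  apply Fin.ext
  show ((i.val + 1) % k + (k - 1)) % k = i.val
  rw [Nat.mod_add_mod, (by omega : i.val + 1 + (k - 1) = i.val + k), Nat.add_mod_right,
    Nat.mod_eq_of_lt i.isLt]

/-! ### Ports and gadget cycle structure -/

/-- An enumeration of the neighbors of `v`. -/
def Egd (v : W) : {x // x ∈ H.neighborFinset v} ≃ Fin (H.degree v) :=
  (H.neighborFinset v).equivFin

def prt (v : W) (i : Fin (H.degree v)) : W := ((Egd H v).symm i).1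

lemma prt_mem (v : W) (i : Fin (H.degree v)) : prt H v i ∈ H.neighborFinset v :=
  ((Egd H v).symm i).2

def idx (v a : W) (ha : a ∈ H.neighborFinset v) : Fin (H.degree v) := Egd H v ⟨a, ha⟩

lemma idx_prt (v : W) (i : Fin (H.degree v)) :
    idx H v (prt H v i) (prt_mem H v i) = i := by
  have h : (⟨prt H v i, prt_mem H v i⟩ : {x // x ∈ H.neighborFinset v}) = (Egd H v).symm i :=
    Subtype.ext rfl
  rw [idx, h, Equiv.apply_symm_apply]

lemma prt_idx (v a : W) (ha : a ∈ H.neighborFinset v) : prt H v (idx H v a ha) = a := by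
  rw [prt, idx, Equiv.symm_apply_apply]

lemma prt_inj (v : W) {i j : Fin (H.degree v)} (h : prt H v i = prt H v j) : i = j :=
  (Egd H v).symm.injective (Subtype.ext h)

/-- Cyclically adjacent neighbors of `v`. -/
def cyc (v a b : W) : Prop :=
  ∃ (ha : a ∈ H.neighborFinset v) (hb : b ∈ H.neighborFinset v),
    idx H v b hb = nextIdx (idx H v a ha) ∨ idx H v a ha = nextIdx (idx H v b hb)

lemma cyc_symm {v a b : W} (h : cyc H v a b) : cyc H v b a := by
  obtain ⟨ha, hb, h⟩ := h
  exact ⟨hb, ha, h.symm.imp (fun x => x) (fun x => x)⟩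

lemma cyc_irrefl {v a : W} (h3 : 3 ≤ H.degree v) (h : cyc H v a a) : False := by
  obtain ⟨ha, hb, h⟩ := h
  rcases h with h | h <;> exact nextIdx_ne (by omega) _ h.symm

/-! ### The cubic expansion graph -/

/-- Raw vertices: `(v, u, 0)` is the port of `v` towards `u`; `(v, u, 1)` is an auxiliary
vertex of the degree-2 gadget. -/
def Valid (x : W × W × Fin 2) : Prop :=
  H.Adj x.1 x.2.1 ∧ (x.2.2 = 1 → H.degree x.1 = 2)

abbrev Vx := {x : W × W × Fin 2 // Valid H x}

instance : Fintype (Vx H) := Fintype.ofFinite _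

/-- The raw adjacency relation of the expansion. -/
def R (x y : W × W × Fin 2) : Prop :=
  (y.1 = x.2.1 ∧ y.2.1 = x.1 ∧ x.2.2 = 0 ∧ y.2.2 = 0 ∧ H.Adj x.1 x.2.1)
  ∨ (y.1 = x.1 ∧ x.2.2 = 0 ∧ y.2.2 = 0 ∧ 3 ≤ H.degree x.1 ∧ cyc H x.1 x.2.1 y.2.1)
  ∨ (y.1 = x.1 ∧ H.degree x.1 = 2 ∧ H.Adj x.1 x.2.1 ∧ H.Adj x.1 y.2.1 ∧
      ((x.2.2 = 0 ∧ y.2.2 = 1) ∨ (x.2.2 = 1 ∧ y.2.2 = 0) ∨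
        (x.2.2 = 1 ∧ y.2.2 = 1 ∧ x.2.1 ≠ y.2.1)))

lemma R_symm {x y : W × W × Fin 2} (h : R H x y) : R H y x := by
  rcases h with ⟨h1, h2, h3, h4, h5⟩ | ⟨h1, h2, h3, h4, h5⟩ | ⟨h1, h2, h3, h4, h5⟩
  · exact Or.inl ⟨by rw [h2], by rw [h1], h4, h3, by rw [h1, h2]; exact h5.symm⟩
  · refine Or.inr (Or.inl ⟨h1.symm, h3, h2, by rw [h1]; exact h4, ?_⟩)
    rw [h1]; exact cyc_symm H h5
  · refine Or.inr (Or.inr ⟨h1.symm, by rw [h1]; exact h2, by rw [h1]; exact h4,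
      by rw [h1]; exact h3, ?_⟩)
    rcases h5 with ⟨a, b⟩ | ⟨a, b⟩ | ⟨a, b, c⟩
    · exact Or.inr (Or.inl ⟨b, a⟩)
    · exact Or.inl ⟨b, a⟩
    · exact Or.inr (Or.inr ⟨b, a, Ne.symm c⟩)

lemma R_irrefl (x : W × W × Fin 2) (h : R H x x) : False := by
  rcases h with ⟨h1, h2, h3, h4, h5⟩ | ⟨h1, h2, h3, h4, h5⟩ | ⟨h1, h2, h3, h4, h5⟩
  · rw [← h1] at h5; exact H.loopless.irrefl _ h5
  · exact cyc_irrefl H h4 h5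
  · rcases h5 with ⟨a, b⟩ | ⟨a, b⟩ | ⟨a, b, c⟩
    · rw [a] at b; simp at b
    · rw [a] at b; simp at b
    · exact c rfl

/-- The cubic expansion of `H`. -/
def GG : SimpleGraph (Vx H) where
  Adj x y := R H x.1 y.1
  symm := ⟨fun x y h => R_symm H h⟩
  loopless := ⟨fun x h => R_irrefl H x.1 h⟩

/-- The port of `u` towards `v`. -/
def pO (u v : W) (h : H.Adj u v) : Vx H :=
  ⟨(u, v, 0), ⟨h, by simp⟩⟩

/-- The auxiliary gadget vertex of `v` labelled by the neighbor `a`. -/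
def pE (v a : W) (h : H.Adj v a) (h2 : H.degree v = 2) : Vx H :=
  ⟨(v, a, 1), ⟨h, fun _ => h2⟩⟩

lemma adj_ext (u v : W) (h : H.Adj u v) :
    (GG H).Adj (pO H u v h) (pO H v u h.symm) :=
  Or.inl ⟨rfl, rfl, rfl, rfl, h⟩

/-! ### Degree-2 lower bound from bridgelessness -/

lemma two_le_degree (hB : Bridgeless H) {v a : W} (h : H.Adj v a) : 2 ≤ H.degree v := by
  by_contra hlt
  push_neg at hlt
  have ha : a ∈ H.neighborFinset v := by rwa [SimpleGraph.mem_neighborFinset]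
  have h1 : H.degree v = 1 := by
    have : 1 ≤ H.degree v := Finset.card_pos.mpr ⟨a, ha⟩
    omega
  obtain ⟨b, hb⟩ := Finset.card_eq_one.mp h1
  rw [(by have := ha; rw [hb, Finset.mem_singleton] at this; exact this.symm : b = a)] at hb
  refine hB s(v, a) (by rwa [SimpleGraph.mem_edgeSet]) ?_
  rw [SimpleGraph.isBridge_iff]
  rintro ⟨w⟩
  cases w with
  | nil => exact H.loopless.irrefl _ h
  | @cons _ x _ hadj w' =>
      have hx : x ∈ H.neighborFinset v := by
        rw [SimpleGraph.mem_neighborFinset]; exact hadj.1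
      rw [hb, Finset.mem_singleton] at hx
      subst hx
      exact hadj.2 ((SimpleGraph.fromEdgeSet_adj _).mpr ⟨rfl, h.ne⟩)

/-! ### The expansion is cubic -/

lemma degree_eq_of_neighborFinset {x : Vx H} {y1 y2 y3 : Vx H}
    (hset : (GG H).neighborFinset x = {y1, y2, y3})
    (h12 : y1 ≠ y2) (h13 : y1 ≠ y3) (h23 : y2 ≠ y3) : (GG H).degree x = 3 := by
  have : (GG H).degree x = ({y1, y2, y3} : Finset (Vx H)).card := by
    rw [← hset]; rfl
  rw [this, Finset.card_insert_of_notMem (by simp [h12, h13]), Finset.card_pair h23]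

lemma GG_cubic (hB : Bridgeless H) : ∀ x, (GG H).degree x = 3 := by
  rintro ⟨⟨v, a, i⟩, hva, hi⟩
  have hva : H.Adj v a := hva
  have h2 : 2 ≤ H.degree v := two_le_degree H hB hva
  have ha : a ∈ H.neighborFinset v := (H.mem_neighborFinset v a).mpr hva
  rcases eq_or_ne i 1 with hi1 | hine
  · -- extra vertex of a degree-2 gadget
    subst hi1
    have hdeg2 : H.degree v = 2 := hi rfl
    obtain ⟨c, hac, hc, hNv⟩ : ∃ c, a ≠ c ∧ H.Adj v c ∧ H.neighborFinset v = {a, c} := by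
      obtain ⟨b1, b2, h12, hN⟩ := Finset.card_eq_two.mp hdeg2
      have haN : a ∈ ({b1, b2} : Finset W) := by rw [← hN]; exact ha
      rcases Finset.mem_insert.mp haN with h | h
      · refine ⟨b2, by rw [h]; exact h12, ?_, by rw [hN, h]⟩
        rw [← H.mem_neighborFinset, hN]; simp
      · rw [Finset.mem_singleton] at h
        refine ⟨b1, by rw [h]; exact h12.symm, ?_, by rw [hN, h, Finset.pair_comm]⟩
        rw [← H.mem_neighborFinset, hN]; simp
    refine degree_eq_of_neighborFinset H
      (y1 := pO H v a hva) (y2 := pO H v c hc) (y3 := pE H v c hc hdeg2) ?_ ?_ ?_ ?_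
    · ext y
      obtain ⟨⟨w1, w2, w3⟩, hw⟩ := y
      rw [SimpleGraph.mem_neighborFinset]
      simp only [Finset.mem_insert, Finset.mem_singleton]
      constructor
      · rintro (⟨hh1, hh2, hh3, hh4, hh5⟩ | ⟨hh1, hh2, hh3, hh4, hh5⟩ |
          ⟨hh1, hh2, hh3, hh4, hh5⟩)
        · exact absurd (show (1 : Fin 2) = 0 from hh3) (by decide)
        · exact absurd (show (1 : Fin 2) = 0 from hh2) (by decide)
        · rcases hh5 with ⟨hv1, hv2⟩ | ⟨hv1, hv2⟩ | ⟨hv1, hv2, hv3⟩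
          · exact absurd (show (1 : Fin 2) = 0 from hv1) (by decide)
          · -- y is a port of v
            have hw2 : w2 ∈ H.neighborFinset v :=
              (H.mem_neighborFinset _ _).mpr (show H.Adj v w2 from hh4)
            rw [hNv] at hw2
            rcases Finset.mem_insert.mp hw2 with h | h
            · left
              exact Subtype.ext (Prod.ext (show w1 = v from hh1)
                (Prod.ext h (show w3 = 0 from hv2)))
            · rw [Finset.mem_singleton] at h
              right; left
              exact Subtype.ext (Prod.ext (show w1 = v from hh1)
                (Prod.ext h (show w3 = 0 from hv2)))
          · -- y is the other extra vertex
            have hw2 : w2 ∈ H.neighborFinset v :=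
              (H.mem_neighborFinset _ _).mpr (show H.Adj v w2 from hh4)
            rw [hNv] at hw2
            rcases Finset.mem_insert.mp hw2 with h | h
            · exact absurd h.symm (show a ≠ w2 from hv3)
            · rw [Finset.mem_singleton] at h
              right; right
              exact Subtype.ext (Prod.ext (show w1 = v from hh1)
                (Prod.ext h (show w3 = 1 from hv2)))
      · rintro (h | h | h) <;> rw [h]
        · exact Or.inr (Or.inr ⟨rfl, hdeg2, hva, hva, Or.inr (Or.inl ⟨rfl, rfl⟩)⟩)
        · exact Or.inr (Or.inr ⟨rfl, hdeg2, hva, hc, Or.inr (Or.inl ⟨rfl, rfl⟩)⟩)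
        · exact Or.inr (Or.inr ⟨rfl, hdeg2, hva, hc, Or.inr (Or.inr ⟨rfl, rfl, hac⟩)⟩)
    · intro h
      exact hac (congrArg (fun z => z.1.2.1) h)
    · intro h
      have h' : (0 : Fin 2) = 1 := congrArg (fun z => z.1.2.2) h
      exact absurd h' (by decide)
    · intro h
      have h' : (0 : Fin 2) = 1 := congrArg (fun z => z.1.2.2) h
      exact absurd h' (by decide)
  · -- port vertex
    have hi0 : i = 0 := by
      rcases eq_or_ne i 0 with h | h
      · exact h
      · exact absurd (fin2_eq_one h) hine
    subst hi0
    rcases Nat.lt_or_ge (H.degree v) 3 with hk2 | hk3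
    · -- port of a degree-2 gadget
      have hdeg2 : H.degree v = 2 := by omega
      obtain ⟨b1, b2, h12, hN⟩ := Finset.card_eq_two.mp hdeg2
      have hb1 : H.Adj v b1 := by
        rw [← H.mem_neighborFinset, hN]; simp
      have hb2 : H.Adj v b2 := by
        rw [← H.mem_neighborFinset, hN]; simp
      refine degree_eq_of_neighborFinset H
        (y1 := pO H a v hva.symm) (y2 := pE H v b1 hb1 hdeg2) (y3 := pE H v b2 hb2 hdeg2)
        ?_ ?_ ?_ ?_
      · ext y
        obtain ⟨⟨w1, w2, w3⟩, hw⟩ := y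
        rw [SimpleGraph.mem_neighborFinset]
        simp only [Finset.mem_insert, Finset.mem_singleton]
        constructor
        · rintro (⟨hh1, hh2, hh3, hh4, hh5⟩ | ⟨hh1, hh2, hh3, hh4, hh5⟩ |
            ⟨hh1, hh2, hh3, hh4, hh5⟩)
          · left
            exact Subtype.ext (Prod.ext (show w1 = a from hh1)
              (Prod.ext (show w2 = v from hh2) (show w3 = 0 from hh4)))
          · exact absurd (show 3 ≤ H.degree v from hh4) (by omega)
          · rcases hh5 with ⟨hv1, hv2⟩ | ⟨hv1, hv2⟩ | ⟨hv1, hv2, hv3⟩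
            · have hw2 : w2 ∈ H.neighborFinset v :=
                (H.mem_neighborFinset _ _).mpr (show H.Adj v w2 from hh4)
              rw [hN] at hw2
              rcases Finset.mem_insert.mp hw2 with h | h
              · right; left
                exact Subtype.ext (Prod.ext (show w1 = v from hh1)
                  (Prod.ext h (show w3 = 1 from hv2)))
              · rw [Finset.mem_singleton] at h
                right; right
                exact Subtype.ext (Prod.ext (show w1 = v from hh1)
                  (Prod.ext h (show w3 = 1 from hv2)))
            · exact absurd (show (0 : Fin 2) = 1 from hv1) (by decide)
            · exact absurd (show (0 : Fin 2) = 1 from hv1) (by decide)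
        · rintro (h | h | h) <;> rw [h]
          · exact Or.inl ⟨rfl, rfl, rfl, rfl, hva⟩
          · exact Or.inr (Or.inr ⟨rfl, hdeg2, hva, hb1, Or.inl ⟨rfl, rfl⟩⟩)
          · exact Or.inr (Or.inr ⟨rfl, hdeg2, hva, hb2, Or.inl ⟨rfl, rfl⟩⟩)
      · intro h
        exact hva.ne' (congrArg (fun z => z.1.1) h)
      · intro h
        exact hva.ne' (congrArg (fun z => z.1.1) h)
      · intro h
        exact h12 (congrArg (fun z => z.1.2.1) h)
    · -- port of a cycle gadget
      have hnx : H.Adj v (prt H v (nextIdx (idx H v a ha))) :=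
        (H.mem_neighborFinset _ _).mp (prt_mem H v _)
      have hpv : H.Adj v (prt H v (prevIdx (idx H v a ha))) :=
        (H.mem_neighborFinset _ _).mp (prt_mem H v _)
      refine degree_eq_of_neighborFinset H
        (y1 := pO H a v hva.symm)
        (y2 := pO H v (prt H v (nextIdx (idx H v a ha))) hnx)
        (y3 := pO H v (prt H v (prevIdx (idx H v a ha))) hpv) ?_ ?_ ?_ ?_
      · ext y
        obtain ⟨⟨w1, w2, w3⟩, hw⟩ := y
        rw [SimpleGraph.mem_neighborFinset]
        simp only [Finset.mem_insert, Finset.mem_singleton]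
        constructor
        · rintro (⟨hh1, hh2, hh3, hh4, hh5⟩ | ⟨hh1, hh2, hh3, hh4, hh5⟩ |
            ⟨hh1, hh2, hh3, hh4, hh5⟩)
          · left
            exact Subtype.ext (Prod.ext (show w1 = a from hh1)
              (Prod.ext (show w2 = v from hh2) (show w3 = 0 from hh4)))
          · obtain ⟨ha', hb', hcy⟩ := (show cyc H v a w2 from hh5)
            rcases hcy with hcy | hcy
            · right; left
              refine Subtype.ext (Prod.ext (show w1 = v from hh1)
                (Prod.ext ?_ (show w3 = 0 from hh3)))
              show w2 = prt H v (nextIdx (idx H v a ha))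
              rw [← hcy]
              exact (prt_idx H v w2 hb').symm
            · right; right
              refine Subtype.ext (Prod.ext (show w1 = v from hh1)
                (Prod.ext ?_ (show w3 = 0 from hh3)))
              have h6 := congrArg prevIdx hcy
              rw [prevIdx_nextIdx] at h6
              show w2 = prt H v (prevIdx (idx H v a ha))
              rw [h6]
              exact (prt_idx H v w2 hb').symm
          · exact absurd (show H.degree v = 2 from hh2) (by omega)
        · rintro (h | h | h) <;> rw [h]
          · exact Or.inl ⟨rfl, rfl, rfl, rfl, hva⟩
          · exact Or.inr (Or.inl ⟨rfl, rfl, rfl, hk3,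
              ⟨ha, prt_mem H v _, Or.inl (idx_prt H v _)⟩⟩)
          · exact Or.inr (Or.inl ⟨rfl, rfl, rfl, hk3,
              ⟨ha, prt_mem H v _, Or.inr (by
                show idx H v a ha = nextIdx (idx H v (prt H v (prevIdx (idx H v a ha)))
                  (prt_mem H v _))
                rw [idx_prt H v _, nextIdx_prevIdx])⟩⟩)
      · intro h
        exact hva.ne' (congrArg (fun z => z.1.1) h)
      · intro h
        exact hva.ne' (congrArg (fun z => z.1.1) h)
      · intro h
        have h' := prt_inj H v (congrArg (fun z => z.1.2.1) h)
        have h'' := congrArg nextIdx h'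
        rw [nextIdx_prevIdx] at h''
        exact nextIdx_nextIdx_ne (by omega) _ h''

/-! ### The expansion is bridgeless -/

/-- Internal edges of the gadget of `v`. -/
def Gint (v : W) : SimpleGraph (Vx H) where
  Adj x y := (GG H).Adj x y ∧ x.1.1 = v ∧ y.1.1 = v
  symm := ⟨fun x y ⟨h, hx, hy⟩ => ⟨h.symm, hy, hx⟩⟩
  loopless := ⟨fun x ⟨h, _, _⟩ => (GG H).loopless.irrefl x h⟩

lemma Gint_le_del (v : W) {u1 u2 : Vx H} (hne : u1.1.1 ≠ u2.1.1) :
    Gint H v ≤ (GG H) \ SimpleGraph.fromEdgeSet {s(u1, u2)} := by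
  rintro x y ⟨h, hx, hy⟩
  rw [SimpleGraph.sdiff_adj]
  refine ⟨h, fun hc => ?_⟩
  rw [SimpleGraph.fromEdgeSet_adj] at hc
  have he := Set.mem_singleton_iff.mp hc.1
  rcases Sym2.eq_iff.mp he with ⟨h1, h2⟩ | ⟨h1, h2⟩
  · exact hne (by rw [← h1, ← h2, hx, hy])
  · exact hne (by rw [← h2, ← h1, hx, hy])

lemma prtAdj (v : W) (i : Fin (H.degree v)) : H.Adj v (prt H v i) :=
  (H.mem_neighborFinset _ _).mp (prt_mem H v i)

/-- The port of `v` with cyclic index `i`. -/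
def pP (v : W) (i : Fin (H.degree v)) : Vx H := pO H v (prt H v i) (prtAdj H v i)

lemma pP_inj (v : W) {i j : Fin (H.degree v)} (h : pP H v i = pP H v j) : i = j :=
  prt_inj H v (congrArg (fun t => t.1.2.1) h)

lemma adj_cycle (v : W) (hk3 : 3 ≤ H.degree v) (i : Fin (H.degree v)) :
    (GG H).Adj (pP H v i) (pP H v (nextIdx i)) :=
  Or.inr (Or.inl ⟨rfl, rfl, rfl, hk3, ⟨prt_mem H v i, prt_mem H v _,
    Or.inl ((idx_prt H v _).trans (congrArg nextIdx (idx_prt H v i).symm))⟩⟩)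

lemma pO_eq_pP (v a : W) (ha : H.Adj v a) :
    pO H v a ha = pP H v (idx H v a ((H.mem_neighborFinset _ _).mpr ha)) :=
  Subtype.ext (by
    show (v, a, (0 : Fin 2)) = (v, prt H v (idx H v a _), 0)
    rw [prt_idx])

lemma gadget_reach (hB : Bridgeless H) (v : W) {a b : W} (ha : H.Adj v a)
    (hb : H.Adj v b) : (Gint H v).Reachable (pO H v a ha) (pO H v b hb) := by
  have h2 : 2 ≤ H.degree v := two_le_degree H hB ha
  rcases Nat.lt_or_ge (H.degree v) 3 with hk2 | hk3
  · have hdeg2 : H.degree v = 2 := by omega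
    have ha1 : (Gint H v).Adj (pO H v a ha) (pE H v a ha hdeg2) :=
      ⟨Or.inr (Or.inr ⟨rfl, hdeg2, ha, ha, Or.inl ⟨rfl, rfl⟩⟩), rfl, rfl⟩
    have ha2 : (Gint H v).Adj (pE H v a ha hdeg2) (pO H v b hb) :=
      ⟨Or.inr (Or.inr ⟨rfl, hdeg2, ha, hb, Or.inr (Or.inl ⟨rfl, rfl⟩)⟩), rfl, rfl⟩
    exact ha1.reachable.trans ha2.reachable
  · have step : ∀ i : Fin (H.degree v),
        (Gint H v).Adj (pP H v i) (pP H v (nextIdx i)) :=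
      fun i => ⟨adj_cycle H v hk3 i, rfl, rfl⟩
    have claim : ∀ (i0 : Fin (H.degree v)) (m : ℕ),
        (Gint H v).Reachable (pP H v i0) (pP H v (addIdx i0 m)) := by
      intro i0 m
      induction m with
      | zero => rw [congrArg (pP H v) (addIdx_zero i0)]
      | succ m ih =>
          refine ih.trans ?_
          rw [← congrArg (pP H v) (nextIdx_addIdx i0 m)]
          exact (step _).reachable
    have key : ∀ i j : Fin (H.degree v), (Gint H v).Reachable (pP H v i) (pP H v j) := by
      intro i j
      have hi := i.isLt
      have hj := j.isLt
      have hm : addIdx i (j.val + H.degree v - i.val) = j := by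
        apply Fin.ext
        show (i.val + (j.val + H.degree v - i.val)) % H.degree v = j.val
        rw [(by omega : i.val + (j.val + H.degree v - i.val) = j.val + H.degree v),
          Nat.add_mod_right, Nat.mod_eq_of_lt hj]
      have hc := claim i (j.val + H.degree v - i.val)
      rwa [hm] at hc
    rw [pO_eq_pP H v a ha, pO_eq_pP H v b hb]
    exact key _ _

lemma cycle_del_reach (v : W) (hk3 : 3 ≤ H.degree v) (i : Fin (H.degree v)) :
    ((GG H) \ SimpleGraph.fromEdgeSet {s(pP H v i, pP H v (nextIdx i))}).Reachable
      (pP H v i) (pP H v (nextIdx i)) := by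
  have hstep : ∀ m : ℕ, m + 1 ≤ H.degree v - 1 →
      ((GG H) \ SimpleGraph.fromEdgeSet {s(pP H v i, pP H v (nextIdx i))}).Adj
        (pP H v (addIdx (nextIdx i) m)) (pP H v (addIdx (nextIdx i) (m + 1))) := by
    intro m hm
    rw [← congrArg (pP H v) (nextIdx_addIdx (nextIdx i) m)]
    refine (SimpleGraph.sdiff_adj _ _ _ _).mpr ⟨adj_cycle H v hk3 _, fun hc => ?_⟩
    rw [SimpleGraph.fromEdgeSet_adj] at hc
    have he := Set.mem_singleton_iff.mp hc.1
    have hi := i.isLt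
    have hnv : (nextIdx i).val = (i.val + 1) % H.degree v := rfl
    have hnvlt : (i.val + 1) % H.degree v < H.degree v := Nat.mod_lt _ (by omega)
    rcases Sym2.eq_iff.mp he with ⟨h1, h2⟩ | ⟨h1, h2⟩
    · have h1' := congrArg Fin.val (pP_inj H v h1)
      rw [show (addIdx (nextIdx i) m).val = ((i.val + 1) % H.degree v + m) % H.degree v
        from rfl, Nat.mod_add_mod] at h1'
      rcases Nat.lt_or_ge (i.val + 1 + m) (H.degree v) with hlt | hge
      · rw [Nat.mod_eq_of_lt hlt] at h1'; omega
      · rw [Nat.mod_eq_sub_mod hge, Nat.mod_eq_of_lt (by omega)] at h1'; omega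
    · have h1' := congrArg Fin.val (pP_inj H v h1)
      rw [show (addIdx (nextIdx i) m).val = ((i.val + 1) % H.degree v + m) % H.degree v
        from rfl] at h1'
      have hm0 : m = 0 := by
        have ht : (i.val + 1) % H.degree v < H.degree v := Nat.mod_lt _ (by omega)
        rcases Nat.lt_or_ge ((i.val + 1) % H.degree v + m) (H.degree v) with hlt | hge
        · rw [Nat.mod_eq_of_lt hlt] at h1'; omega
        · rw [Nat.mod_eq_sub_mod hge, Nat.mod_eq_of_lt (by omega)] at h1'; omega
      subst hm0
      have h2' := pP_inj H v h2
      rw [show addIdx (nextIdx i) 0 = nextIdx i from addIdx_zero _] at h2'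
      exact nextIdx_nextIdx_ne hk3 i h2'
  have hwalk : ∀ m : ℕ, m ≤ H.degree v - 1 →
      ((GG H) \ SimpleGraph.fromEdgeSet {s(pP H v i, pP H v (nextIdx i))}).Reachable
        (pP H v (nextIdx i)) (pP H v (addIdx (nextIdx i) m)) := by
    intro m
    induction m with
    | zero => intro _; rw [congrArg (pP H v) (addIdx_zero (nextIdx i))]
    | succ m ih => intro hm; exact (ih (by omega)).trans (hstep m hm).reachable
  have hfin := hwalk (H.degree v - 1) le_rfl
  have hlast : addIdx (nextIdx i) (H.degree v - 1) = i := by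
    have hi := i.isLt
    apply Fin.ext
    show ((i.val + 1) % H.degree v + (H.degree v - 1)) % H.degree v = i.val
    rw [Nat.mod_add_mod, (by omega : i.val + 1 + (H.degree v - 1) = i.val + H.degree v),
      Nat.add_mod_right, Nat.mod_eq_of_lt hi]
  rw [hlast] at hfin
  exact hfin.symm

lemma del_adj {e : Sym2 (Vx H)} {x y : Vx H} (h : (GG H).Adj x y) (hne : s(x, y) ≠ e) :
    ((GG H) \ SimpleGraph.fromEdgeSet {e}).Adj x y := by
  rw [SimpleGraph.sdiff_adj]
  refine ⟨h, fun hc => ?_⟩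
  rw [SimpleGraph.fromEdgeSet_adj] at hc
  exact hne (Set.mem_singleton_iff.mp hc.1)

lemma pO_ne_pE {v a v' b : W} (ha : H.Adj v a) (hb : H.Adj v' b) (h2 : H.degree v' = 2) :
    pO H v a ha ≠ pE H v' b hb h2 := by
  intro h
  have h' : (0 : Fin 2) = 1 := congrArg (fun z => z.1.2.2) h
  exact absurd h' (by decide)

lemma adj_pq (v : W) (hdeg2 : H.degree v = 2) {a b : W} (ha : H.Adj v a)
    (hb : H.Adj v b) : (GG H).Adj (pO H v a ha) (pE H v b hb hdeg2) :=
  Or.inr (Or.inr ⟨rfl, hdeg2, ha, hb, Or.inl ⟨rfl, rfl⟩⟩)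

lemma adj_qq (v : W) (hdeg2 : H.degree v = 2) {a b : W} (ha : H.Adj v a)
    (hb : H.Adj v b) (hab : a ≠ b) :
    (GG H).Adj (pE H v a ha hdeg2) (pE H v b hb hdeg2) :=
  Or.inr (Or.inr ⟨rfl, hdeg2, ha, hb, Or.inr (Or.inr ⟨rfl, rfl, hab⟩)⟩)

lemma exists_other (v : W) (hdeg2 : H.degree v = 2) {z : W} (hz : H.Adj v z) :
    ∃ c, H.Adj v c ∧ c ≠ z := by
  obtain ⟨b1, b2, h12, hN⟩ := Finset.card_eq_two.mp hdeg2
  have hzN : z ∈ ({b1, b2} : Finset W) := by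
    rw [← hN]; exact (H.mem_neighborFinset _ _).mpr hz
  rcases Finset.mem_insert.mp hzN with h | h
  · refine ⟨b2, ?_, by rw [h]; exact h12.symm⟩
    rw [← H.mem_neighborFinset, hN]; simp
  · rw [Finset.mem_singleton] at h
    refine ⟨b1, ?_, by rw [h]; exact h12⟩
    rw [← H.mem_neighborFinset, hN]; simp

lemma deg2_del_reach (v : W) (hdeg2 : H.degree v = 2) {a b : W} (ha : H.Adj v a)
    (hb : H.Adj v b) :
    ((GG H) \ SimpleGraph.fromEdgeSet {s(pO H v a ha, pE H v b hb hdeg2)}).Reachable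
      (pO H v a ha) (pE H v b hb hdeg2) := by
  obtain ⟨ob, hob, hobne⟩ := exists_other H v hdeg2 hb
  obtain ⟨oa, hoa, hoane⟩ := exists_other H v hdeg2 ha
  have r1 := del_adj H (e := s(pO H v a ha, pE H v b hb hdeg2)) (adj_pq H v hdeg2 ha hob) (by
    intro h
    rcases Sym2.eq_iff.mp h with ⟨h1, h2⟩ | ⟨h1, h2⟩
    · exact hobne (congrArg (fun z => z.1.2.1) h2)
    · exact pO_ne_pE H ha hb hdeg2 h1)
  have r2 := del_adj H (e := s(pO H v a ha, pE H v b hb hdeg2)) (adj_pq H v hdeg2 hoa hob) (by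
    intro h
    rcases Sym2.eq_iff.mp h with ⟨h1, h2⟩ | ⟨h1, h2⟩
    · exact hoane (congrArg (fun z => z.1.2.1) h1)
    · exact pO_ne_pE H hoa hb hdeg2 h1)
  have r3 := del_adj H (e := s(pO H v a ha, pE H v b hb hdeg2)) (adj_pq H v hdeg2 hoa hb) (by
    intro h
    rcases Sym2.eq_iff.mp h with ⟨h1, h2⟩ | ⟨h1, h2⟩
    · exact hoane (congrArg (fun z => z.1.2.1) h1)
    · exact pO_ne_pE H hoa hb hdeg2 h1)
  exact (r1.reachable.trans r2.symm.reachable).trans r3.reachable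

lemma deg2_del_reach_qq (v : W) (hdeg2 : H.degree v = 2) {a b : W} (ha : H.Adj v a)
    (hb : H.Adj v b) (hab : a ≠ b) :
    ((GG H) \ SimpleGraph.fromEdgeSet
      {s(pE H v a ha hdeg2, pE H v b hb hdeg2)}).Reachable
      (pE H v a ha hdeg2) (pE H v b hb hdeg2) := by
  have r1 := del_adj H (e := s(pE H v a ha hdeg2, pE H v b hb hdeg2)) ((adj_pq H v hdeg2 ha ha).symm) (by
    intro h
    rcases Sym2.eq_iff.mp h with ⟨h1, h2⟩ | ⟨h1, h2⟩
    · exact pO_ne_pE H ha hb hdeg2 h2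
    · exact pO_ne_pE H ha ha hdeg2 h2
    )
  have r2 := del_adj H (e := s(pE H v a ha hdeg2, pE H v b hb hdeg2)) (adj_pq H v hdeg2 ha hb) (by
    intro h
    rcases Sym2.eq_iff.mp h with ⟨h1, h2⟩ | ⟨h1, h2⟩
    · exact pO_ne_pE H ha ha hdeg2 h1
    · exact pO_ne_pE H ha hb hdeg2 h1
    )
  exact r1.reachable.trans r2.reachable

lemma lift_reach (hB : Bridgeless H) {u v : W} (huv : H.Adj u v) {p q : W}
    (w : (H \ SimpleGraph.fromEdgeSet {s(u, v)}).Walk p q) :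
    ∀ {c d : W} (hc : H.Adj p c) (hd : H.Adj q d),
    ((GG H) \ SimpleGraph.fromEdgeSet
      {s(pO H u v huv, pO H v u huv.symm)}).Reachable (pO H p c hc) (pO H q d hd) := by
  induction w with
  | nil =>
      intro c d hc hd
      exact SimpleGraph.Reachable.mono
        (Gint_le_del H _ (fun h => huv.ne (h : u = v))) (gadget_reach H hB _ hc hd)
  | @cons p x q hadj wt ih =>
      intro c d hc hd
      have hadj' := hadj
      rw [SimpleGraph.sdiff_adj] at hadj'
      obtain ⟨hpx, hnotdel⟩ := hadj'
      have hr1 : ((GG H) \ SimpleGraph.fromEdgeSet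
          {s(pO H u v huv, pO H v u huv.symm)}).Reachable (pO H p c hc) (pO H p x hpx) :=
        SimpleGraph.Reachable.mono
          (Gint_le_del H _ (fun h => huv.ne (h : u = v))) (gadget_reach H hB _ hc hpx)
      have hedge : ((GG H) \ SimpleGraph.fromEdgeSet
          {s(pO H u v huv, pO H v u huv.symm)}).Adj (pO H p x hpx) (pO H x p hpx.symm) := by
        refine del_adj H (adj_ext H p x hpx) ?_
        intro h
        apply hnotdel
        rw [SimpleGraph.fromEdgeSet_adj]
        refine ⟨?_, hpx.ne⟩
        rcases Sym2.eq_iff.mp h with ⟨h1, h2⟩ | ⟨h1, h2⟩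
        · have hp : p = u := congrArg (fun z => z.1.1) h1
          have hx : x = v := congrArg (fun z => z.1.2.1) h1
          rw [hp, hx]; rfl
        · have hp : p = v := congrArg (fun z => z.1.1) h1
          have hx : x = u := congrArg (fun z => z.1.2.1) h1
          rw [hp, hx, Sym2.eq_swap]; rfl
      exact (hr1.trans hedge.reachable).trans (ih hpx.symm hd)

lemma GG_bridgeless (hB : Bridgeless H) : Bridgeless (GG H) := by
  intro e
  refine Sym2.ind (fun x y => ?_) e
  intro he
  rw [SimpleGraph.isBridge_iff]
  have hadj : (GG H).Adj x y := he
  intro hnreach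
  apply hnreach
  obtain ⟨⟨v1, a1, i1⟩, hva1, hi1a⟩ := x
  obtain ⟨⟨w1, w2, w3⟩, hw1, hw3⟩ := y
  have hA : H.Adj v1 a1 := hva1
  rcases hadj with ⟨hh1, hh2, hh3, hh4, hh5⟩ | ⟨hh1, hh2, hh3, hh4, hh5⟩ |
    ⟨hh1, hh2, hh3, hh4, hh5⟩
  · -- external edge
    have hxe : (⟨(v1, a1, i1), hva1, hi1a⟩ : Vx H) = pO H v1 a1 hA :=
      Subtype.ext (Prod.ext rfl (Prod.ext rfl (show i1 = 0 from hh3)))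
    have hye : (⟨(w1, w2, w3), hw1, hw3⟩ : Vx H) = pO H a1 v1 hA.symm :=
      Subtype.ext (Prod.ext (show w1 = a1 from hh1)
        (Prod.ext (show w2 = v1 from hh2) (show w3 = 0 from hh4)))
    rw [hxe, hye]
    have hnb := hB s(v1, a1) ((H.mem_edgeSet).mpr hA)
    rw [SimpleGraph.isBridge_iff] at hnb
    have hre : (H \ SimpleGraph.fromEdgeSet {s(v1, a1)}).Reachable v1 a1 := by
      by_contra hcon
      exact hnb hcon
    obtain ⟨wk⟩ := hre
    exact lift_reach H hB hA wk hA hA.symm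
  · -- cycle gadget edge
    have hk3 : 3 ≤ H.degree v1 := hh4
    obtain ⟨ha', hb', hcy⟩ := (show cyc H v1 a1 w2 from hh5)
    rcases hcy with hcy | hcy
    · have hxe : (⟨(v1, a1, i1), hva1, hi1a⟩ : Vx H) = pP H v1 (idx H v1 a1 ha') :=
        Subtype.ext (Prod.ext rfl (Prod.ext (prt_idx H v1 a1 ha').symm
          (show i1 = 0 from hh2)))
      have hye : (⟨(w1, w2, w3), hw1, hw3⟩ : Vx H)
          = pP H v1 (nextIdx (idx H v1 a1 ha')) :=
        Subtype.ext (Prod.ext (show w1 = v1 from hh1) (Prod.ext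
          (show w2 = prt H v1 (nextIdx (idx H v1 a1 ha')) from by
            rw [← hcy]; exact (prt_idx H v1 w2 hb').symm)
          (show w3 = 0 from hh3)))
      rw [hxe, hye]
      exact cycle_del_reach H v1 hk3 _
    · have hxe : (⟨(v1, a1, i1), hva1, hi1a⟩ : Vx H)
          = pP H v1 (nextIdx (idx H v1 w2 hb')) :=
        Subtype.ext (Prod.ext rfl (Prod.ext
          (show a1 = prt H v1 (nextIdx (idx H v1 w2 hb')) from by
            rw [← hcy]; exact (prt_idx H v1 a1 ha').symm)
          (show i1 = 0 from hh2)))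
      have hye : (⟨(w1, w2, w3), hw1, hw3⟩ : Vx H) = pP H v1 (idx H v1 w2 hb') :=
        Subtype.ext (Prod.ext (show w1 = v1 from hh1)
          (Prod.ext (prt_idx H v1 w2 hb').symm (show w3 = 0 from hh3)))
      rw [hxe, hye, Sym2.eq_swap]
      exact (cycle_del_reach H v1 hk3 _).symm
  · -- degree-2 gadget edge
    have hdeg2 : H.degree v1 = 2 := hh2
    have hBB : H.Adj v1 w2 := hh4
    rcases hh5 with ⟨hv1, hv2⟩ | ⟨hv1, hv2⟩ | ⟨hv1, hv2, hv3⟩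
    · have hxe : (⟨(v1, a1, i1), hva1, hi1a⟩ : Vx H) = pO H v1 a1 hA :=
        Subtype.ext (Prod.ext rfl (Prod.ext rfl (show i1 = 0 from hv1)))
      have hye : (⟨(w1, w2, w3), hw1, hw3⟩ : Vx H) = pE H v1 w2 hBB hdeg2 :=
        Subtype.ext (Prod.ext (show w1 = v1 from hh1)
          (Prod.ext rfl (show w3 = 1 from hv2)))
      rw [hxe, hye]
      exact deg2_del_reach H v1 hdeg2 hA hBB
    · have hxe : (⟨(v1, a1, i1), hva1, hi1a⟩ : Vx H) = pE H v1 a1 hA hdeg2 :=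
        Subtype.ext (Prod.ext rfl (Prod.ext rfl (show i1 = 1 from hv1)))
      have hye : (⟨(w1, w2, w3), hw1, hw3⟩ : Vx H) = pO H v1 w2 hBB :=
        Subtype.ext (Prod.ext (show w1 = v1 from hh1)
          (Prod.ext rfl (show w3 = 0 from hv2)))
      rw [hxe, hye, Sym2.eq_swap]
      exact (deg2_del_reach H v1 hdeg2 hBB hA).symm
    · have hxe : (⟨(v1, a1, i1), hva1, hi1a⟩ : Vx H) = pE H v1 a1 hA hdeg2 :=
        Subtype.ext (Prod.ext rfl (Prod.ext rfl (show i1 = 1 from hv1)))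
      have hye : (⟨(w1, w2, w3), hw1, hw3⟩ : Vx H) = pE H v1 w2 hBB hdeg2 :=
        Subtype.ext (Prod.ext (show w1 = v1 from hh1)
          (Prod.ext rfl (show w3 = 1 from hv2)))
      rw [hxe, hye]
      exact deg2_del_reach_qq H v1 hdeg2 hA hBB (show a1 ≠ w2 from hv3)

/-! ### Transfer of the flow -/

/-- Adjacency across gadgets is exactly the external port matching. -/
lemma adj_cross {x y : Vx H} (h : (GG H).Adj x y) (hne : ¬ y.1.1 = x.1.1) :
    x.1.2.2 = 0 ∧ y.1 = (x.1.2.1, x.1.1, 0) := by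
  rcases h with ⟨h1, h2, h3, h4, h5⟩ | ⟨h1, h2, h3, h4, h5⟩ | ⟨h1, h2, h3, h4, h5⟩
  · refine ⟨h3, ?_⟩
    have : y.1 = (y.1.1, y.1.2.1, y.1.2.2) := rfl
    rw [this, h1, h2, h4]
  · exact absurd h1 hne
  · exact absurd h1 hne

theorem transfer (d : ℕ) (r : ℝ) (hB : Bridgeless H) (hG : HasNZF (GG H) d r) :
    HasNZF H d r := by
  obtain ⟨g, gskew, gsupp, gnorm, gkirch⟩ := hG
  refine ⟨fun u v => if h : H.Adj u v then g (pO H u v h) (pO H v u h.symm) else 0,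
    ?_, ?_, ?_, ?_⟩
  · intro u v
    dsimp only
    by_cases h : H.Adj u v
    · rw [dif_pos h, dif_pos h.symm]; exact gskew _ _
    · rw [dif_neg h, dif_neg (fun h' => h h'.symm), neg_zero]
  · intro u v h; dsimp only; rw [dif_neg h]
  · intro u v h; dsimp only; rw [dif_pos h]; exact gnorm _ _ (adj_ext H u v h)
  · intro v
    dsimp only
    classical
    set S : Finset (Vx H) := Finset.univ.filter (fun x : Vx H => x.1.1 = v) with hS
    set ext : Vx H → EuclideanSpace ℝ (Fin d) := fun x =>
      ∑ y ∈ Finset.univ.filter (fun y : Vx H => ¬ y.1.1 = v), g x y with hext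
    -- each extra-vertex has zero external sum
    have ext_extra : ∀ x : Vx H, x.1.1 = v → x.1.2.2 = 1 → ext x = 0 := by
      intro x hx1 hx2
      apply Finset.sum_eq_zero
      intro y hy
      rw [Finset.mem_filter] at hy
      apply gsupp
      intro hadj
      obtain ⟨h0, _⟩ := adj_cross H hadj (by rw [hx1]; exact hy.2)
      rw [hx2] at h0; exact absurd h0 (by simp)
    -- each port's external sum is the single matched term
    have ext_port : ∀ (a : W) (h : H.Adj v a),
        ext (pO H v a h) = g (pO H v a h) (pO H a v h.symm) := by
      intro a h
      apply Finset.sum_eq_single_of_mem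
      · rw [Finset.mem_filter]
        exact ⟨Finset.mem_univ _, fun hav => H.loopless.irrefl v (hav ▸ h)⟩
      · intro y hy hyne
        rw [Finset.mem_filter] at hy
        apply gsupp
        intro hadj
        obtain ⟨_, hy1⟩ := adj_cross H hadj hy.2
        exact hyne (Subtype.ext hy1)
    -- Kirchhoff over the whole gadget
    have hzero : (∑ x ∈ S, ∑ y ∈ S, g x y) + ∑ x ∈ S, ext x = 0 := by
      rw [← Finset.sum_add_distrib]
      rw [Finset.sum_congr rfl (fun x _ =>
        (Finset.sum_filter_add_sum_filter_not Finset.univ (fun y : Vx H => y.1.1 = v) (g x)))]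
      exact Finset.sum_eq_zero (fun x _ => gkirch x)
    -- the internal double sum vanishes by skew-symmetry
    have hskewsum : (∑ x ∈ S, ∑ y ∈ S, g x y) = 0 := by
      have hs : (∑ x ∈ S, ∑ y ∈ S, g x y) = - ∑ x ∈ S, ∑ y ∈ S, g x y :=
        calc (∑ x ∈ S, ∑ y ∈ S, g x y)
            = ∑ y ∈ S, ∑ x ∈ S, g x y := Finset.sum_comm
          _ = ∑ y ∈ S, - ∑ x ∈ S, g y x := Finset.sum_congr rfl (fun y _ => by
              rw [← Finset.sum_neg_distrib]
              exact Finset.sum_congr rfl (fun x _ => gskew x y))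
          _ = - ∑ y ∈ S, ∑ x ∈ S, g y x := Finset.sum_neg_distrib _
      have h0 : (∑ x ∈ S, ∑ y ∈ S, g x y) + ∑ x ∈ S, ∑ y ∈ S, g x y = 0 :=
        eq_neg_iff_add_eq_zero.mp hs
      have h2 : (2 : ℝ) • (∑ x ∈ S, ∑ y ∈ S, g x y) = 0 := by
        rw [two_smul]; exact h0
      rcases smul_eq_zero.mp h2 with h | h
      · norm_num at h
      · exact h
    have hext0 : ∑ x ∈ S, ext x = 0 := by
      rw [hskewsum, zero_add] at hzero; exact hzero
    -- restrict to ports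
    set S0 : Finset (Vx H) :=
      Finset.univ.filter (fun x : Vx H => x.1.1 = v ∧ x.1.2.2 = 0) with hS0
    have hsub : S0 ⊆ S := by
      intro x hx; rw [Finset.mem_filter] at *
      exact ⟨hx.1, hx.2.1⟩
    have hS0sum : ∑ x ∈ S0, ext x = 0 := by
      rw [← hext0]
      apply Finset.sum_subset hsub
      intro x hx hx0
      rw [Finset.mem_filter] at hx hx0
      push_neg at hx0
      exact ext_extra x hx.2 (fin2_eq_one (hx0 (Finset.mem_univ x) hx.2))
    -- reindex over the neighbors of v
    have hmain : ∑ u ∈ H.neighborFinset v,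
        (if h : H.Adj v u then g (pO H v u h) (pO H u v h.symm) else 0) = ∑ x ∈ S0, ext x := by
      refine Finset.sum_bij' (fun u hu => pO H v u ((H.mem_neighborFinset v u).mp hu))
        (fun x _ => x.1.2.1) ?_ ?_ ?_ ?_ ?_
      · intro a ha
        rw [Finset.mem_filter]
        exact ⟨Finset.mem_univ _, rfl, rfl⟩
      · intro x hx
        rw [Finset.mem_filter] at hx
        rw [H.mem_neighborFinset]
        have := x.2.1
        rw [hx.2.1] at this; exact this
      · intro a ha; rfl
      · rintro ⟨⟨x1, x2, x3⟩, hv⟩ hx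
        rw [Finset.mem_filter] at hx
        apply Subtype.ext
        exact Prod.ext hx.2.1.symm (Prod.ext rfl hx.2.2.symm)
      · intro a ha
        rw [dif_pos ((H.mem_neighborFinset v a).mp ha)]
        exact (ext_port a ((H.mem_neighborFinset v a).mp ha)).symm
    have huniv : ∑ u, (if h : H.Adj v u then g (pO H v u h) (pO H u v h.symm) else 0)
        = ∑ u ∈ H.neighborFinset v,
          (if h : H.Adj v u then g (pO H v u h) (pO H u v h.symm) else 0) := by
      refine (Finset.sum_subset (Finset.subset_univ _) ?_).symm
      intro x _ hx
      rw [dif_neg]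
      rwa [H.mem_neighborFinset] at hx
    rw [huniv, hmain, hS0sum]

end NZFRed

/-- If every bridgeless cubic graph admits an `(r,d)`-NZF, then every bridgeless graph
admits an `(r,d)`-NZF (for `d ≥ 1` and real `r ≥ 2`). -/
theorem stmt_12 (d : ℕ) (hd : 1 ≤ d) (r : ℝ) (hr : 2 ≤ r)
    (hcubic : ∀ (V : Type) [Fintype V] (G : SimpleGraph V) [DecidableRel G.Adj],
      Bridgeless G → (∀ v, G.degree v = 3) → HasNZF G d r) :
    ∀ (W : Type) [Fintype W] (H : SimpleGraph W), Bridgeless H → HasNZF H d r := by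
  intro W _ H hB
  classical
  exact NZFRed.transfer H d r hB
    (hcubic (NZFRed.Vx H) (NZFRed.GG H) (NZFRed.GG_bridgeless H hB) (NZFRed.GG_cubic H hB))
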